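/- Let P be a primal on a nonempty set X. Then the relation ↪ on the power set of X defined by A ↪ B if and only if Aᶜ ∈ P and Bᶜ ∈ P is a primal-proximity on X, i.e., it satisfies all five primal-proximity axioms with respect to P. -/
import Mathlib

open Set

/-- A collection `P` of subsets of `X` is a *primal* on `X`. -/
def IsPrimalOn {X : Type*} (P : Set (Set X)) : Prop :=
  (Set.univ : Set X) ∉ P ∧
  (∀ A B : Set X, A ∈ P → B ⊆ A → B ∈ P) ∧
  (∀ A B : Set X, A ∩ B ∈ P → A ∈ P ∨ B ∈ P)

/-- A binary relation `r` on the power set of `X` is a *primal-proximity* with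
respect to a primal `P` on `X`. -/
def IsPrimalProximity {X : Type*} (P : Set (Set X)) (r : Set X → Set X → Prop) : Prop :=
  (∀ A B : Set X, r A B → r B A) ∧
  (∀ A B C : Set X, r A (B ∪ C) ↔ (r A B ∨ r A C)) ∧
  (∀ A : Set X, Aᶜ ∉ P → ∀ B : Set X, ¬ r A B) ∧
  (∀ A B : Set X, (A ∩ B)ᶜ ∈ P → r A B) ∧
  (∀ A B : Set X, ¬ r A B →
    ∃ C D : Set X, ¬ r A Cᶜ ∧ ¬ r Dᶜ B ∧ (C ∩ D)ᶜ ∉ P)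

/-- The point-primal proximity of `A`: `A^↪ = {x | {x} ↪ A}`. -/
def ppp {X : Type*} (r : Set X → Set X → Prop) (A : Set X) : Set X :=
  {x : X | r {x} A}

theorem stmt_0 {X : Type*} [Nonempty X] (P : Set (Set X)) (hP : IsPrimalOn P) :
    IsPrimalProximity P (fun A B : Set X => Aᶜ ∈ P ∧ Bᶜ ∈ P) := by
  obtain ⟨huniv, hdown, hsplit⟩ := hP
  refine ⟨fun A B h => ⟨h.2, h.1⟩, ?_, ?_, ?_, ?_⟩
  · intro A B C
    constructor
    · rintro ⟨hA, hBC⟩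
      rw [Set.compl_union] at hBC
      rcases hsplit _ _ hBC with h | h
      · exact Or.inl ⟨hA, h⟩
      · exact Or.inr ⟨hA, h⟩
    · rintro (⟨hA, hB⟩ | ⟨hA, hC⟩)
      · exact ⟨hA, hdown _ _ hB (by rw [Set.compl_union]; exact Set.inter_subset_left)⟩
      · exact ⟨hA, hdown _ _ hC (by rw [Set.compl_union]; exact Set.inter_subset_right)⟩
  · intro A hA B h
    exact hA h.1
  · intro A B h
    rw [Set.compl_inter] at h
    exact ⟨hdown _ _ h Set.subset_union_left, hdown _ _ h Set.subset_union_right⟩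
  · intro A B h
    rw [not_and_or] at h
    rcases h with h | h
    · refine ⟨∅, Set.univ, ?_, ?_, ?_⟩
      · intro hc; exact h hc.1
      · intro hc; simp at hc; exact huniv hc.1
      · simpa using huniv
    · refine ⟨Set.univ, ∅, ?_, ?_, ?_⟩
      · intro hc; simp at hc; exact huniv hc.2
      · intro hc; exact h hc.2
      · simpa using huniv
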